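/- Causal product rules: if f, g : ℝ^ω → ℝ^ω are causal and causally differentiable at σ, then f × g and f ⊙ g (Cauchy and Hadamard products of the outputs) are causally differentiable at σ with D(f×g)(σ)(Δσ) = D f(σ)(Δσ) × g(σ) + f(σ) × D g(σ)(Δσ), and D(f⊙g)(σ)(Δσ) = D f(σ)(Δσ) ⊙ g(σ) + f(σ) ⊙ D g(σ)(Δσ). -/

import Mathlib

/-- A stream function is *causal* if initial segments of length `k+1` of the
input determine initial segments of length `k+1` of the output. -/
def Causal {A B : Type*} (f : (ℕ → A) → (ℕ → B)) : Prop :=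
  ∀ σ τ : ℕ → A, ∀ k : ℕ, (∀ i ≤ k, σ i = τ i) → ∀ i ≤ k, f σ i = f τ i

/-- Extend a finite word to a stream (padding with the first letter). -/
def extW {A : Type*} {k : ℕ} (w : Fin (k+1) → A) : ℕ → A :=
  fun n => if h : n < k+1 then w ⟨n, h⟩ else w 0

/-- The `k`-th pointwise approximant (unrolling) of a causal function. -/
def U {A B : Type*} (f : (ℕ → A) → (ℕ → B)) (k : ℕ) (w : Fin (k+1) → A) : B :=
  f (extW w) k

/-- The `k`-th stringwise approximant (truncation) of a causal function. -/
def T {A B : Type*} (f : (ℕ → A) → (ℕ → B)) (k : ℕ) (w : Fin (k+1) → A) :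
    Fin (k+1) → B := fun i => f (extW w) i

/-- The initial segment `σ_{0:k}` of a stream, as a finite word. -/
def init {A : Type*} (σ : ℕ → A) (k : ℕ) : Fin (k+1) → A := fun i => σ i

/-- A causal function is differentiable at a stream `σ` when all of its
pointwise approximants are differentiable at `σ_{0:k}`. -/
def CausalDiffAt {E F : Type*} [NormedAddCommGroup E] [NormedSpace ℝ E]
    [NormedAddCommGroup F] [NormedSpace ℝ F]
    (f : (ℕ → E) → ℕ → F) (σ : ℕ → E) : Prop :=
  ∀ k, DifferentiableAt ℝ (U f k) (init σ k)

/-- `L` is the causal derivative of `f` at `σ`: the `k`-th pointwise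
approximant of `L` is the Jacobian of `U_k(f)` at `σ_{0:k}`. -/
def IsCausalDerivAt {E F : Type*} [NormedAddCommGroup E] [NormedSpace ℝ E]
    [NormedAddCommGroup F] [NormedSpace ℝ F]
    (f : (ℕ → E) → ℕ → F) (σ : ℕ → E) (L : (ℕ → E) → ℕ → F) : Prop :=
  ∀ (Δ : ℕ → E) (k : ℕ), L Δ k = fderiv ℝ (U f k) (init σ k) (init Δ k)

/-- The Cauchy product of two real streams. -/
def cauchy (σ τ : ℕ → ℝ) : ℕ → ℝ :=
  fun k => ∑ i ∈ Finset.range (k+1), σ i * τ (k - i)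

/-- The constant stream `[r] = (r, 0, 0, ...)`. -/
def streamConst (r : ℝ) : ℕ → ℝ := fun k => if k = 0 then r else 0

/-- The Hadamard (pointwise) product of two real streams. -/
def had (σ τ : ℕ → ℝ) : ℕ → ℝ := fun k => σ k * τ k


noncomputable def restrictL (i k : ℕ) : (Fin (k+1) → ℝ) →L[ℝ] (Fin (i+1) → ℝ) :=
  ContinuousLinearMap.pi (fun j => ContinuousLinearMap.proj ⟨min j.val k, by omega⟩)

lemma restrictL_init (i k : ℕ) (h : i ≤ k) (σ : ℕ → ℝ) :
    restrictL i k (init σ k) = init σ i := by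
  funext j
  have hj : (j : ℕ) ≤ k := le_trans (by omega) h
  show σ (min j.val k) = σ j.val
  rw [Nat.min_eq_left hj]

lemma U_restrict {f : (ℕ → ℝ) → ℕ → ℝ} (hf : Causal f) {i k : ℕ} (h : i ≤ k)
    (w : Fin (k+1) → ℝ) : f (extW w) i = U f i (restrictL i k w) := by
  apply hf _ _ i _ i le_rfl
  intro n hn
  show extW w n = extW (restrictL i k w) n
  rw [extW, extW, dif_pos (show n < k+1 by omega), dif_pos (show n < i+1 by omega)]
  show w _ = w ⟨min n k, _⟩
  congr 1
  exact Fin.ext (Nat.min_eq_left (by omega)).symm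

lemma U_init {f : (ℕ → ℝ) → ℕ → ℝ} (hf : Causal f) (σ : ℕ → ℝ) (k : ℕ) :
    U f k (init σ k) = f σ k := by
  apply hf _ _ k _ k le_rfl
  intro n hn
  show extW (init σ k) n = σ n
  rw [extW, dif_pos (show n < k+1 by omega)]
  rfl

lemma hasFDeriv_comp_restrict {h : (ℕ → ℝ) → ℕ → ℝ} (σ : ℕ → ℝ) {i k : ℕ} (hi : i ≤ k)
    (hd : DifferentiableAt ℝ (U h i) (init σ i)) :
    HasFDerivAt (fun w => U h i (restrictL i k w))
      ((fderiv ℝ (U h i) (init σ i)).comp (restrictL i k)) (init σ k) := by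
  have h1 : HasFDerivAt (U h i) (fderiv ℝ (U h i) (init σ i)) (restrictL i k (init σ k)) := by
    rw [restrictL_init i k hi σ]; exact hd.hasFDerivAt
  exact h1.comp _ (restrictL i k).hasFDerivAt

lemma cauchy_U_eq {f g : (ℕ → ℝ) → ℕ → ℝ} (hf : Causal f) (hg : Causal g) (k : ℕ) :
    U (fun ρ => cauchy (f ρ) (g ρ)) k =
      fun w => ∑ i ∈ Finset.range (k+1),
        U f i (restrictL i k w) * U g (k-i) (restrictL (k-i) k w) := by
  funext w
  show ∑ i ∈ Finset.range (k+1), f (extW w) i * g (extW w) (k - i) = _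
  refine Finset.sum_congr rfl fun i hi => ?_
  have hik : i ≤ k := by simpa [Nat.lt_succ_iff] using hi
  rw [U_restrict hf hik, U_restrict hg (Nat.sub_le k i)]

lemma cauchy_hasFDeriv {f g : (ℕ → ℝ) → ℕ → ℝ} (hf : Causal f) (hg : Causal g)
    (σ : ℕ → ℝ) (hdf : ∀ k, DifferentiableAt ℝ (U f k) (init σ k))
    (hdg : ∀ k, DifferentiableAt ℝ (U g k) (init σ k)) (k : ℕ) :
    HasFDerivAt (U (fun ρ => cauchy (f ρ) (g ρ)) k)
      (∑ i ∈ Finset.range (k+1),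
        (f σ i • ((fderiv ℝ (U g (k-i)) (init σ (k-i))).comp (restrictL (k-i) k))
          + g σ (k-i) • ((fderiv ℝ (U f i) (init σ i)).comp (restrictL i k))))
      (init σ k) := by
  rw [cauchy_U_eq hf hg k]
  apply HasFDerivAt.fun_sum
  intro i hi
  have hik : i ≤ k := by simpa [Nat.lt_succ_iff] using hi
  have hF := hasFDeriv_comp_restrict σ hik (hdf i)
  have hG := hasFDeriv_comp_restrict σ (Nat.sub_le k i) (hdg (k-i))
  have := hF.mul hG
  rwa [restrictL_init i k hik, restrictL_init (k-i) k (Nat.sub_le k i),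
    U_init hf, U_init hg] at this

lemma had_hasFDeriv {f g : (ℕ → ℝ) → ℕ → ℝ} (hf : Causal f) (hg : Causal g)
    (σ : ℕ → ℝ) (hdf : ∀ k, DifferentiableAt ℝ (U f k) (init σ k))
    (hdg : ∀ k, DifferentiableAt ℝ (U g k) (init σ k)) (k : ℕ) :
    HasFDerivAt (U (fun ρ => had (f ρ) (g ρ)) k)
      (f σ k • fderiv ℝ (U g k) (init σ k) + g σ k • fderiv ℝ (U f k) (init σ k))
      (init σ k) := by
  have heq : U (fun ρ => had (f ρ) (g ρ)) k = fun w => U f k w * U g k w := rfl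
  rw [heq]
  have := (hdf k).hasFDerivAt.mul (hdg k).hasFDerivAt
  rwa [U_init hf, U_init hg] at this

theorem causal_product_rules' (f g : (ℕ → ℝ) → ℕ → ℝ)
    (hf : Causal f) (hg : Causal g) (σ : ℕ → ℝ) (Df Dg : (ℕ → ℝ) → ℕ → ℝ)
    (hdf : ∀ k, DifferentiableAt ℝ (U f k) (init σ k))
    (hdg : ∀ k, DifferentiableAt ℝ (U g k) (init σ k))
    (hDf : ∀ (Δ : ℕ → ℝ) (k : ℕ), Df Δ k = fderiv ℝ (U f k) (init σ k) (init Δ k))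
    (hDg : ∀ (Δ : ℕ → ℝ) (k : ℕ), Dg Δ k = fderiv ℝ (U g k) (init σ k) (init Δ k)) :
    ((∀ k, DifferentiableAt ℝ (U (fun ρ => cauchy (f ρ) (g ρ)) k) (init σ k)) ∧
      ∀ (Δ : ℕ → ℝ) (k : ℕ),
        (cauchy (Df Δ) (g σ) + cauchy (f σ) (Dg Δ)) k
          = fderiv ℝ (U (fun ρ => cauchy (f ρ) (g ρ)) k) (init σ k) (init Δ k)) ∧
    ((∀ k, DifferentiableAt ℝ (U (fun ρ => had (f ρ) (g ρ)) k) (init σ k)) ∧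
      ∀ (Δ : ℕ → ℝ) (k : ℕ),
        (had (Df Δ) (g σ) + had (f σ) (Dg Δ)) k
          = fderiv ℝ (U (fun ρ => had (f ρ) (g ρ)) k) (init σ k) (init Δ k)) := by
  refine ⟨⟨fun k => (cauchy_hasFDeriv hf hg σ hdf hdg k).differentiableAt, ?_⟩,
    fun k => (had_hasFDeriv hf hg σ hdf hdg k).differentiableAt, ?_⟩
  · intro Δ k
    rw [(cauchy_hasFDeriv hf hg σ hdf hdg k).fderiv]
    simp only [Pi.add_apply, cauchy, ContinuousLinearMap.coe_sum',
      Finset.sum_apply, ContinuousLinearMap.add_apply, ContinuousLinearMap.coe_smul',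
      Pi.smul_apply, ContinuousLinearMap.coe_comp', Function.comp_apply, smul_eq_mul,
      ← Finset.sum_add_distrib]
    refine Finset.sum_congr rfl fun i hi => ?_
    have hik : i ≤ k := by simpa [Nat.lt_succ_iff] using hi
    rw [restrictL_init i k hik, restrictL_init (k-i) k (Nat.sub_le k i),
      ← hDf Δ i, ← hDg Δ (k-i)]
    ring
  · intro Δ k
    rw [(had_hasFDeriv hf hg σ hdf hdg k).fderiv]
    simp only [Pi.add_apply, had, ContinuousLinearMap.add_apply,
      ContinuousLinearMap.coe_smul', Pi.smul_apply, smul_eq_mul,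
      ← hDf Δ k, ← hDg Δ k]
    ring

/-- Causal product rules for the Cauchy and Hadamard products. -/
theorem causal_product_rules (f g : (ℕ → ℝ) → ℕ → ℝ)
    (hf : Causal f) (hg : Causal g) (σ : ℕ → ℝ) (Df Dg : _)
    (hdf : CausalDiffAt f σ) (hdg : CausalDiffAt g σ)
    (hDf : IsCausalDerivAt f σ Df) (hDg : IsCausalDerivAt g σ Dg) :
    (CausalDiffAt (fun ρ => cauchy (f ρ) (g ρ)) σ ∧
      IsCausalDerivAt (fun ρ => cauchy (f ρ) (g ρ)) σ
        (fun Δ => cauchy (Df Δ) (g σ) + cauchy (f σ) (Dg Δ))) ∧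
    (CausalDiffAt (fun ρ => had (f ρ) (g ρ)) σ ∧
      IsCausalDerivAt (fun ρ => had (f ρ) (g ρ)) σ
        (fun Δ => had (Df Δ) (g σ) + had (f σ) (Dg Δ))) := by
  exact causal_product_rules' f g hf hg σ Df Dg hdf hdg hDf hDg
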